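/- Let s ∈ (0,1), q ≥ 1, a < b with a,b ≥ 0, and f : ℝ → ℝ twice continuously differentiable with |f''|^q s-convex in the second sense on [a,b]. Set M(s) = 1/(s+3) and N(s) = 1/(s+3) − 2/(s+2) + 1/(s+1). Then for all x ∈ [a,b]: |(1/(b−a)) ∫_a^b f(t) dt − f(x) + ((2x−a−b)/2) f'(x)| ≤ (1/3)^{1−1/q} · (1/(2(b−a))) · [ (x−a)³ (M(s)|f''(x)|^q + N(s)|f''(a)|^q)^{1/q} + (b−x)³ (M(s)|f''(x)|^q + N(s)|f''(b)|^q)^{1/q} ]. -/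

import Mathlib

open intervalIntegral MeasureTheory Set

lemma ident (f : ℝ → ℝ) (U : Set ℝ) (hU : IsOpen U) (hf : ContDiffOn ℝ 2 f U)
    (α y : ℝ) (h : Set.uIcc α y ⊆ U) :
    (∫ u in α..y, f u) - (y-α)*f y + (y-α)^2/2 * deriv f y
      = (1/2) * ∫ u in α..y, (u-α)^2 * deriv (deriv f) u := by
  have hf1 : ContDiffOn ℝ 1 (deriv f) U := hf.deriv_of_isOpen (m := 1) hU (by norm_num)
  have hf2 : ContinuousOn (deriv (deriv f)) U :=
    (hf1.deriv_of_isOpen (m := 0) hU (by norm_num)).continuousOn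
  have hcf : ContinuousOn f U := hf.continuousOn
  set F : ℝ → ℝ := fun z => (∫ u in α..z, f u) - (z-α)*f z + (z-α)^2/2 * deriv f z
      - (1/2) * ∫ u in α..z, (u-α)^2 * deriv (deriv f) u with hF
  have key : ∀ z ∈ Set.uIcc α y, HasDerivAt F 0 z := by
    intro z hz
    have hzU : z ∈ U := h hz
    have hsub2 : Set.uIcc α z ⊆ U := fun w hw =>
      h (Set.uIcc_subset_uIcc Set.left_mem_uIcc hz hw)
    have h1 : HasDerivAt (fun w => ∫ u in α..w, f u) (f z) z := by
      refine intervalIntegral.integral_hasDerivAt_right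
        ((hcf.mono hsub2).intervalIntegrable)
        (hcf.stronglyMeasurableAtFilter hU z hzU)
        (hcf.continuousAt (hU.mem_nhds hzU))
    have hdf : HasDerivAt f (deriv f z) z :=
      ((hf.differentiableOn (by norm_num)).differentiableAt (hU.mem_nhds hzU)).hasDerivAt
    have hdf2 : HasDerivAt (deriv f) (deriv (deriv f) z) z :=
      ((hf1.differentiableOn (by norm_num)).differentiableAt (hU.mem_nhds hzU)).hasDerivAt
    have h2 : HasDerivAt (fun w => (w-α)*f w) (1 * f z + (z-α) * deriv f z) z :=
      ((hasDerivAt_id z).sub_const α).mul hdf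
    have h3 : HasDerivAt (fun w => (w-α)^2/2 * deriv f w)
        ((2*(z-α)^1*1/2) * deriv f z + (z-α)^2/2 * deriv (deriv f) z) z := by
      exact ((((hasDerivAt_id z).sub_const α).pow 2).div_const 2).mul hdf2
    have hcg : ContinuousOn (fun u => (u-α)^2 * deriv (deriv f) u) U :=
      (ContinuousOn.pow (by fun_prop) 2).mul hf2
    have h4 : HasDerivAt (fun w => ∫ u in α..w, (u-α)^2 * deriv (deriv f) u)
        ((z-α)^2 * deriv (deriv f) z) z := by
      refine intervalIntegral.integral_hasDerivAt_right
        ((hcg.mono hsub2).intervalIntegrable)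
        (hcg.stronglyMeasurableAtFilter hU z hzU)
        (hcg.continuousAt (hU.mem_nhds hzU))
    have := ((h1.sub h2).add h3).sub (h4.const_mul (1/2))
    convert this using 1
    case e'_9 => ring
    all_goals rfl
  have h0 : IntervalIntegrable (fun _ : ℝ => (0:ℝ)) MeasureTheory.volume α y :=
    intervalIntegrable_const
  have := intervalIntegral.integral_eq_sub_of_hasDerivAt key h0
  simp only [intervalIntegral.integral_zero] at this
  have hFα : F α = 0 := by simp [hF]
  have : F y = 0 := by linarith [this]
  simpa [hF, sub_eq_zero] using this

lemma subst (g : ℝ → ℝ) (c x : ℝ) :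
    (∫ u in c..x, (u-c)^2 * g u)
      = (x-c)^3 * ∫ t in (0:ℝ)..1, t^2 * g (t*x + (1-t)*c) := by
  by_cases hxc : x = c
  · simp [hxc]
  have hc : x - c ≠ 0 := sub_ne_zero.mpr hxc
  have := intervalIntegral.integral_comp_mul_add (a := (0:ℝ)) (b := 1)
    (f := fun u => (u-c)^2 * g u) hc c
  have e1 : ∀ t : ℝ, ((x-c)*t + c - c)^2 * g ((x-c)*t + c) = (x-c)^2 * (t^2 * g (t*x + (1-t)*c)) := by
    intro t; ring_nf
  rw [show (x-c)*0 + c = c by ring, show (x-c)*1 + c = x by ring] at this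
  simp only [e1] at this
  rw [intervalIntegral.integral_const_mul] at this
  rw [smul_eq_mul] at this
  field_simp at this
  simp only [show ∀ t : ℝ, x * t + c * (1 - t) = t * x + (1 - t) * c from fun t => by ring] at this
  linarith [this]

lemma rpow_cont {r : ℝ} (hr : 0 ≤ r) : Continuous (fun t : ℝ => t ^ r) :=
  continuous_iff_continuousAt.mpr fun x => Real.continuousAt_rpow_const x r (Or.inr hr)

lemma int_rpow {r : ℝ} (hr : 0 < r) : (∫ t in (0:ℝ)..1, t ^ r) = 1/(r+1) := by
  rw [integral_rpow (Or.inl (by linarith))]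
  rw [Real.one_rpow, Real.zero_rpow (by linarith)]
  ring

lemma int_sq_rpow {r : ℝ} (hr : 0 < r) : (∫ t in (0:ℝ)..1, t^2 * t ^ r) = 1/(r+3) := by
  have e : Set.EqOn (fun t : ℝ => t^2 * t ^ r) (fun t : ℝ => t ^ (r+2)) (Set.uIcc 0 1) := by
    intro t ht
    rcases eq_or_lt_of_le ((Set.uIcc_of_le (by norm_num : (0:ℝ) ≤ 1) ▸ ht).1) with h0 | h0
    · simp [← h0, Real.zero_rpow (by linarith : r + 2 ≠ 0)]
    · show t^2 * t ^ r = t ^ (r+2)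
      rw [Real.rpow_add h0, show ((2:ℝ)) = ((2:ℕ):ℝ) by norm_num, Real.rpow_natCast]
      ring
  rw [intervalIntegral.integral_congr e, int_rpow (by linarith)]
  ring_nf

lemma int_sq_one_sub_rpow {r : ℝ} (hr : 0 < r) :
    (∫ t in (0:ℝ)..1, t^2 * (1-t) ^ r) = 1/(r+3) - 2/(r+2) + 1/(r+1) := by
  have h1 : (∫ t in (0:ℝ)..1, t^2 * (1-t) ^ r) = ∫ t in (0:ℝ)..1, (1-t)^2 * t ^ r := by
    have := intervalIntegral.integral_comp_sub_left (a := (0:ℝ)) (b := 1)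
      (fun u => (1-u)^2 * u ^ r) 1
    simp only [show (1:ℝ) - 1 = 0 by ring, show (1:ℝ) - 0 = 1 by ring] at this
    rw [← this]
    congr 1
    ext t
    ring_nf
  rw [h1]
  have e : Set.EqOn (fun t : ℝ => (1-t)^2 * t ^ r)
      (fun t : ℝ => t ^ r - 2 * (t^1 * t ^ r) + t^2 * t ^ r) (Set.uIcc 0 1) := by
    intro t _
    show (1-t)^2 * t ^ r = t ^ r - 2 * (t^1 * t ^ r) + t^2 * t ^ r
    ring
  rw [intervalIntegral.integral_congr e]
  have i1 : IntervalIntegrable (fun t : ℝ => t ^ r) MeasureTheory.volume 0 1 :=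
    (rpow_cont hr.le).intervalIntegrable 0 1
  have i2 : IntervalIntegrable (fun t : ℝ => t^1 * t ^ r) MeasureTheory.volume 0 1 :=
    ((continuous_pow 1).mul (rpow_cont hr.le)).intervalIntegrable 0 1
  have i3 : IntervalIntegrable (fun t : ℝ => t^2 * t ^ r) MeasureTheory.volume 0 1 :=
    ((continuous_pow 2).mul (rpow_cont hr.le)).intervalIntegrable 0 1
  rw [intervalIntegral.integral_add (i1.sub (i2.const_mul 2)) i3,
    intervalIntegral.integral_sub i1 (i2.const_mul 2),
    intervalIntegral.integral_const_mul, int_rpow hr, int_sq_rpow hr]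
  have e2 : (∫ t in (0:ℝ)..1, t^1 * t ^ r) = 1/(r+2) := by
    have e3 : Set.EqOn (fun t : ℝ => t^1 * t ^ r) (fun t : ℝ => t ^ (r+1)) (Set.uIcc 0 1) := by
      intro t ht
      rcases eq_or_lt_of_le ((Set.uIcc_of_le (by norm_num : (0:ℝ) ≤ 1) ▸ ht).1) with h0 | h0
      · simp [← h0, Real.zero_rpow (by linarith : r + 1 ≠ 0)]
      · show t^1 * t ^ r = t ^ (r+1)
        rw [Real.rpow_add h0, Real.rpow_one]
        ring
    rw [intervalIntegral.integral_congr e3, int_rpow (by linarith)]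
    ring_nf
  rw [e2]
  ring

lemma side_bound (g : ℝ → ℝ) (hg : ContinuousOn g (Set.Icc 0 1)) {q s A B : ℝ}
    (hq : 1 ≤ q) (hs : 0 < s) (hA : 0 ≤ A) (hB : 0 ≤ B)
    (hpm : (∫ t in (0:ℝ)..1, t^2 * |g t|)
      ≤ (1/3:ℝ) ^ (1-1/q) * (∫ t in (0:ℝ)..1, t^2 * |g t| ^ q) ^ (1/q))
    (hsc : ∀ t ∈ Set.Icc (0:ℝ) 1, |g t| ^ q ≤ t ^ s * A + (1-t) ^ s * B) :
    |∫ t in (0:ℝ)..1, t^2 * g t|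
      ≤ (1/3:ℝ) ^ (1-1/q) * ((1/(s+3)) * A + (1/(s+3) - 2/(s+2) + 1/(s+1)) * B) ^ (1/q) := by
  have h01 : (0:ℝ) ≤ 1 := by norm_num
  have hq0 : (0:ℝ) < q := lt_of_lt_of_le one_pos hq
  have hIcc : Set.uIcc (0:ℝ) 1 = Set.Icc 0 1 := Set.uIcc_of_le h01
  have habs : |∫ t in (0:ℝ)..1, t^2 * g t| ≤ ∫ t in (0:ℝ)..1, t^2 * |g t| := by
    calc |∫ t in (0:ℝ)..1, t^2 * g t| ≤ ∫ t in (0:ℝ)..1, |t^2 * g t| :=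
        intervalIntegral.abs_integral_le_integral_abs h01
      _ = ∫ t in (0:ℝ)..1, t^2 * |g t| := by
        apply intervalIntegral.integral_congr
        intro t _
        show |t ^ 2 * g t| = t ^ 2 * |g t|
        rw [abs_mul, abs_of_nonneg (sq_nonneg t)]
  have hint1 : IntervalIntegrable (fun t : ℝ => t^2 * |g t| ^ q) MeasureTheory.volume 0 1 := by
    apply ContinuousOn.intervalIntegrable
    rw [hIcc]
    exact (continuous_pow 2).continuousOn.mul (hg.abs.rpow_const fun x _ => Or.inr hq0.le)
  have hint2 : IntervalIntegrable (fun t : ℝ => t^2 * (t ^ s * A + (1-t) ^ s * B))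
      MeasureTheory.volume 0 1 := by
    apply Continuous.intervalIntegrable
    exact (continuous_pow 2).mul (((rpow_cont hs.le).mul continuous_const).add
      (((rpow_cont hs.le).comp (continuous_const.sub continuous_id)).mul continuous_const))
  have hle : ∀ t ∈ Set.Icc (0:ℝ) 1, t^2 * |g t| ^ q ≤ t^2 * (t ^ s * A + (1-t) ^ s * B) :=
    fun t ht => mul_le_mul_of_nonneg_left (hsc t ht) (sq_nonneg t)
  have hmono := intervalIntegral.integral_mono_on h01 hint1 hint2 hle
  have hsplit : (∫ t in (0:ℝ)..1, t^2 * (t ^ s * A + (1-t) ^ s * B))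
      = (1/(s+3)) * A + (1/(s+3) - 2/(s+2) + 1/(s+1)) * B := by
    have e : (fun t : ℝ => t^2 * (t ^ s * A + (1-t) ^ s * B))
        = fun t : ℝ => (t^2 * t ^ s) * A + (t^2 * (1-t) ^ s) * B := funext fun t => by ring
    rw [e]
    have ia : IntervalIntegrable (fun t : ℝ => (t^2 * t ^ s) * A) MeasureTheory.volume 0 1 :=
      (((continuous_pow 2).mul (rpow_cont hs.le)).mul continuous_const).intervalIntegrable 0 1
    have ib : IntervalIntegrable (fun t : ℝ => (t^2 * (1-t) ^ s) * B) MeasureTheory.volume 0 1 :=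
      (((continuous_pow 2).mul ((rpow_cont hs.le).comp
        (continuous_const.sub continuous_id))).mul continuous_const).intervalIntegrable 0 1
    rw [intervalIntegral.integral_add ia ib, intervalIntegral.integral_mul_const,
      intervalIntegral.integral_mul_const, int_sq_rpow hs, int_sq_one_sub_rpow hs]
  have hnn : 0 ≤ ∫ t in (0:ℝ)..1, t^2 * |g t| ^ q :=
    intervalIntegral.integral_nonneg h01 fun t _ =>
      mul_nonneg (sq_nonneg t) (Real.rpow_nonneg (abs_nonneg _) _)
  calc |∫ t in (0:ℝ)..1, t^2 * g t| ≤ ∫ t in (0:ℝ)..1, t^2 * |g t| := habs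
    _ ≤ (1/3:ℝ) ^ (1-1/q) * (∫ t in (0:ℝ)..1, t^2 * |g t| ^ q) ^ (1/q) := hpm
    _ ≤ (1/3:ℝ) ^ (1-1/q) * ((1/(s+3)) * A + (1/(s+3) - 2/(s+2) + 1/(s+1)) * B) ^ (1/q) := by
        apply mul_le_mul_of_nonneg_left _ (Real.rpow_nonneg (by norm_num) _)
        exact Real.rpow_le_rpow hnn (hsplit ▸ hmono) (by positivity)

lemma power_mean (g : ℝ → ℝ) (hg : ContinuousOn g (Set.Icc 0 1)) {q : ℝ} (hq : 1 ≤ q) :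
    (∫ t in (0:ℝ)..1, t^2 * |g t|)
      ≤ (1/3:ℝ) ^ (1-1/q) * (∫ t in (0:ℝ)..1, t^2 * |g t| ^ q) ^ (1/q) := by
  rcases eq_or_lt_of_le hq with h1 | h1
  · subst h1
    simp only [one_div_one, sub_self, Real.rpow_zero, Real.rpow_one, one_mul]
    exact le_of_eq (by simp [Real.rpow_one])
  -- q > 1 case
  set p := q/(q-1) with hp
  have hq0 : (0:ℝ) < q := by linarith
  have hq1 : q - 1 ≠ 0 := by linarith
  have hpq : Real.HolderConjugate p q := by
    rw [Real.holderConjugate_iff]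
    constructor
    · rw [hp]; rw [lt_div_iff₀ (by linarith)]; linarith
    · rw [hp]; field_simp; ring
  have hp0 : 0 < p := hpq.pos
  set μ := MeasureTheory.volume.restrict (Set.Ioc (0:ℝ) 1) with hμ
  set F : ℝ → ℝ := fun t => (t^2) ^ (1/p) with hFdef
  set G : ℝ → ℝ := fun t => (t^2) ^ (1/q) * |g t| with hGdef
  have hinv : 1/p + 1/q = 1 := by
    have := hpq.inv_add_inv_eq_one; rw [one_div, one_div]; exact this
  have hFc : Continuous F := (rpow_cont (by positivity)).comp (continuous_pow 2)
  have hGc : ContinuousOn G (Set.Icc 0 1) :=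
    (((rpow_cont (by positivity)).comp (continuous_pow 2)).continuousOn).mul hg.abs
  have hFmem : MeasureTheory.MemLp F (ENNReal.ofReal p) μ := by
    refine MeasureTheory.MemLp.of_bound hFc.aestronglyMeasurable 1 ?_
    filter_upwards [MeasureTheory.self_mem_ae_restrict (measurableSet_Ioc : MeasurableSet (Set.Ioc (0:ℝ) 1))] with t ht
    rw [Real.norm_eq_abs, abs_of_nonneg (Real.rpow_nonneg (sq_nonneg t) _)]
    exact Real.rpow_le_one (sq_nonneg t) (by nlinarith [ht.1, ht.2]) (by positivity)
  obtain ⟨C, hC⟩ := (isCompact_Icc : IsCompact (Set.Icc (0:ℝ) 1)).exists_bound_of_continuousOn hg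
  have hC0 : 0 ≤ C := le_trans (norm_nonneg _) (hC 0 (by norm_num))
  have hGmem : MeasureTheory.MemLp G (ENNReal.ofReal q) μ := by
    refine MeasureTheory.MemLp.of_bound
      ((hGc.mono Set.Ioc_subset_Icc_self).aestronglyMeasurable measurableSet_Ioc) C ?_
    filter_upwards [MeasureTheory.self_mem_ae_restrict (measurableSet_Ioc : MeasurableSet (Set.Ioc (0:ℝ) 1))] with t ht
    have h2 : (t^2) ^ (1/q) ≤ 1 :=
      Real.rpow_le_one (sq_nonneg t) (by nlinarith [ht.1, ht.2]) (by positivity)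
    have h3 : |g t| ≤ C := by
      have := hC t (Set.Ioc_subset_Icc_self ht); rwa [Real.norm_eq_abs] at this
    have hGt : ‖G t‖ = (t^2) ^ (1/q) * |g t| := by
      rw [Real.norm_eq_abs]
      exact abs_of_nonneg (mul_nonneg (Real.rpow_nonneg (sq_nonneg t) _) (abs_nonneg _))
    rw [hGt]
    calc (t^2) ^ (1/q) * |g t| ≤ 1 * C := mul_le_mul h2 h3 (abs_nonneg _) zero_le_one
      _ = C := one_mul C
  have hFn : 0 ≤ᵐ[μ] F := Filter.Eventually.of_forall fun t => Real.rpow_nonneg (sq_nonneg t) _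
  have hGn : 0 ≤ᵐ[μ] G :=
    Filter.Eventually.of_forall fun t => mul_nonneg (Real.rpow_nonneg (sq_nonneg t) _) (abs_nonneg _)
  have holder := MeasureTheory.integral_mul_le_Lp_mul_Lq_of_nonneg hpq hFn hGn hFmem hGmem
  -- rewrite the three integrals
  have eFG : ∫ t, F t * G t ∂μ = ∫ t in (0:ℝ)..1, t^2 * |g t| := by
    rw [intervalIntegral.integral_of_le (by norm_num : (0:ℝ) ≤ 1)]
    refine MeasureTheory.integral_congr_ae ?_
    filter_upwards [MeasureTheory.self_mem_ae_restrict (measurableSet_Ioc : MeasurableSet (Set.Ioc (0:ℝ) 1))] with t ht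
    have ht2 : (0:ℝ) < t^2 := by nlinarith [ht.1]
    rw [hFdef, hGdef]
    show (t^2) ^ (1/p) * ((t^2) ^ (1/q) * |g t|) = t^2 * |g t|
    rw [← mul_assoc, ← Real.rpow_add ht2, hinv, Real.rpow_one]
  have epq : (1:ℝ)/p = 1 - 1/q := by linarith
  have eF : ∫ t, F t ^ p ∂μ = 1/3 := by
    have e1 : ∀ t : ℝ, F t ^ p = t^2 := by
      intro t
      show ((t^2) ^ (1/p)) ^ p = t^2
      rw [← Real.rpow_mul (sq_nonneg t), one_div_mul_cancel hp0.ne', Real.rpow_one]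
    simp only [e1]
    rw [← intervalIntegral.integral_of_le (by norm_num : (0:ℝ) ≤ 1)]
    simp [integral_pow]
    norm_num
  have eG : ∫ t, G t ^ q ∂μ = ∫ t in (0:ℝ)..1, t^2 * |g t| ^ q := by
    have e1 : ∀ t : ℝ, G t ^ q = t^2 * |g t| ^ q := by
      intro t
      show ((t^2) ^ (1/q) * |g t|) ^ q = t^2 * |g t| ^ q
      rw [Real.mul_rpow (Real.rpow_nonneg (sq_nonneg t) _) (abs_nonneg _),
        ← Real.rpow_mul (sq_nonneg t), one_div_mul_cancel hq0.ne', Real.rpow_one]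
    simp only [e1]
    rw [← intervalIntegral.integral_of_le (by norm_num : (0:ℝ) ≤ 1)]
  rw [eFG, eF, eG, epq] at holder
  exact holder

theorem stmt_9 (f : ℝ → ℝ) (a b : ℝ) (s q : ℝ) (hs : s ∈ Set.Ioo (0:ℝ) 1) (hq : 1 ≤ q)
    (ha : 0 ≤ a) (hb : 0 ≤ b) (hab : a < b)
    (U : Set ℝ) (hU : IsOpen U) (hsub : Set.Icc a b ⊆ U) (hf : ContDiffOn ℝ 2 f U)
    (hsc : ∀ u ∈ Set.Icc a b, ∀ v ∈ Set.Icc a b, ∀ l ∈ Set.Icc (0:ℝ) 1,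
      |deriv (deriv f) (l*u + (1-l)*v)| ^ q ≤
        l ^ s * |deriv (deriv f) u| ^ q + (1-l) ^ s * |deriv (deriv f) v| ^ q) :
    ∀ x ∈ Set.Icc a b,
      |(1/(b-a)) * (∫ t in a..b, f t) - f x + ((2*x - a - b)/2) * deriv f x|
        ≤ (1/3 : ℝ) ^ (1 - 1/q) * (1/(2*(b-a))) *
            ((x-a)^3 * ((1/(s+3)) * |deriv (deriv f) x| ^ q
                + (1/(s+3) - 2/(s+2) + 1/(s+1)) * |deriv (deriv f) a| ^ q) ^ (1/q)
             + (b-x)^3 * ((1/(s+3)) * |deriv (deriv f) x| ^ q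
                + (1/(s+3) - 2/(s+2) + 1/(s+1)) * |deriv (deriv f) b| ^ q) ^ (1/q)) := by
  intro x hx
  have hxa : a ≤ x := hx.1
  have hxb : x ≤ b := hx.2
  have hG : ContinuousOn (deriv (deriv f)) U :=
    ((hf.deriv_of_isOpen (m := 1) hU (by norm_num)).deriv_of_isOpen (m := 0) hU
      (by norm_num)).continuousOn
  have hmem : ∀ c ∈ Set.Icc a b, ∀ t ∈ Set.Icc (0:ℝ) 1, t*x + (1-t)*c ∈ Set.Icc a b := by
    intro c hc t ht
    constructor
    · nlinarith [hx.1, hx.2, hc.1, hc.2, ht.1, ht.2]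
    · nlinarith [hx.1, hx.2, hc.1, hc.2, ht.1, ht.2]
  have hcomp : ∀ c ∈ Set.Icc a b,
      ContinuousOn (fun t => deriv (deriv f) (t*x + (1-t)*c)) (Set.Icc 0 1) := by
    intro c hc
    exact hG.comp ((continuous_id.mul continuous_const).add
      ((continuous_const.sub continuous_id).mul continuous_const)).continuousOn
      fun t ht => hsub (hmem c hc t ht)
  have haI : a ∈ Set.Icc a b := ⟨le_refl a, hab.le⟩
  have hbI : b ∈ Set.Icc a b := ⟨hab.le, le_refl b⟩
  -- bounds on the two side integrals
  have boundA := side_bound (fun t => deriv (deriv f) (t*x + (1-t)*a)) (hcomp a haI)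
    hq hs.1 (Real.rpow_nonneg (abs_nonneg _) q) (Real.rpow_nonneg (abs_nonneg _) q)
    (power_mean _ (hcomp a haI) hq) (fun t ht => hsc x hx a haI t ht)
  have boundB := side_bound (fun t => deriv (deriv f) (t*x + (1-t)*b)) (hcomp b hbI)
    hq hs.1 (Real.rpow_nonneg (abs_nonneg _) q) (Real.rpow_nonneg (abs_nonneg _) q)
    (power_mean _ (hcomp b hbI) hq) (fun t ht => hsc x hx b hbI t ht)
  -- identity
  have hsubax : Set.uIcc a x ⊆ U := by
    rw [Set.uIcc_of_le hxa]
    exact fun w hw => hsub (Set.Icc_subset_Icc le_rfl hxb hw)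
  have hsubbx : Set.uIcc b x ⊆ U := by
    rw [Set.uIcc_comm, Set.uIcc_of_le hxb]
    exact fun w hw => hsub (Set.Icc_subset_Icc hxa le_rfl hw)
  have idA := ident f U hU hf a x hsubax
  have idB := ident f U hU hf b x hsubbx
  have subA := subst (deriv (deriv f)) a x
  have subB := subst (deriv (deriv f)) b x
  have i1 : IntervalIntegrable f MeasureTheory.volume a x :=
    (hf.continuousOn.mono hsubax).intervalIntegrable
  have i2 : IntervalIntegrable f MeasureTheory.volume x b := by
    apply ContinuousOn.intervalIntegrable
    exact hf.continuousOn.mono (by rw [Set.uIcc_comm] at hsubbx; exact hsubbx)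
  have hadd := intervalIntegral.integral_add_adjacent_intervals i1 i2
  have hsym : (∫ t in x..b, f t) = - ∫ t in b..x, f t := intervalIntegral.integral_symm b x
  have hba : (b:ℝ) - a ≠ 0 := sub_ne_zero.mpr (ne_of_gt hab)
  have key : (1/(b-a)) * (∫ t in a..b, f t) - f x + ((2*x - a - b)/2) * deriv f x
      = (1/(2*(b-a))) * ((x-a)^3 * (∫ t in (0:ℝ)..1, t^2 * deriv (deriv f) (t*x + (1-t)*a))
        + (b-x)^3 * (∫ t in (0:ℝ)..1, t^2 * deriv (deriv f) (t*x + (1-t)*b))) := by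
    have hA : (∫ t in a..x, f t) = (x-a)*f x - (x-a)^2/2*deriv f x
        + ((x-a)^3 * (∫ t in (0:ℝ)..1, t^2 * deriv (deriv f) (t*x + (1-t)*a)))/2 := by
      linear_combination idA + (1/2) * subA
    have hB : (∫ t in b..x, f t) = (x-b)*f x - (x-b)^2/2*deriv f x
        + ((x-b)^3 * (∫ t in (0:ℝ)..1, t^2 * deriv (deriv f) (t*x + (1-t)*b)))/2 := by
      linear_combination idB + (1/2) * subB
    rw [← hadd, hsym, hA, hB]
    field_simp
    ring
  rw [key]
  set Ia := ∫ t in (0:ℝ)..1, t^2 * deriv (deriv f) (t*x + (1-t)*a) with hIa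
  set Ib := ∫ t in (0:ℝ)..1, t^2 * deriv (deriv f) (t*x + (1-t)*b) with hIb
  set Pa := (1/(s+3)) * |deriv (deriv f) x| ^ q
    + (1/(s+3) - 2/(s+2) + 1/(s+1)) * |deriv (deriv f) a| ^ q with hPa
  set Pb := (1/(s+3)) * |deriv (deriv f) x| ^ q
    + (1/(s+3) - 2/(s+2) + 1/(s+1)) * |deriv (deriv f) b| ^ q with hPb
  have cpos : (0:ℝ) < 1/(2*(b-a)) := div_pos one_pos (by linarith)
  have h3a : (0:ℝ) ≤ (x-a)^3 := pow_nonneg (by linarith) 3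
  have h3b : (0:ℝ) ≤ (b-x)^3 := pow_nonneg (by linarith) 3
  calc |(1/(2*(b-a))) * ((x-a)^3 * Ia + (b-x)^3 * Ib)|
      = (1/(2*(b-a))) * |(x-a)^3 * Ia + (b-x)^3 * Ib| := by
        rw [abs_mul, abs_of_pos cpos]
    _ ≤ (1/(2*(b-a))) * ((x-a)^3 * |Ia| + (b-x)^3 * |Ib|) := by
        apply mul_le_mul_of_nonneg_left _ cpos.le
        calc |(x-a)^3 * Ia + (b-x)^3 * Ib| ≤ |(x-a)^3 * Ia| + |(b-x)^3 * Ib| := abs_add_le _ _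
          _ = (x-a)^3 * |Ia| + (b-x)^3 * |Ib| := by
              rw [abs_mul, abs_mul, abs_of_nonneg h3a, abs_of_nonneg h3b]
    _ ≤ (1/(2*(b-a))) * ((x-a)^3 * ((1/3:ℝ) ^ (1-1/q) * Pa ^ (1/q))
          + (b-x)^3 * ((1/3:ℝ) ^ (1-1/q) * Pb ^ (1/q))) := by
        apply mul_le_mul_of_nonneg_left _ cpos.le
        exact add_le_add (mul_le_mul_of_nonneg_left boundA h3a)
          (mul_le_mul_of_nonneg_left boundB h3b)
    _ = (1/3 : ℝ) ^ (1 - 1/q) * (1/(2*(b-a))) * ((x-a)^3 * Pa ^ (1/q) + (b-x)^3 * Pb ^ (1/q)) := by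
        ring
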